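/- For every integer N ≥ 0, the polynomial x³ − (N+1)x² − Nx − (N+1) has exactly one root in the open interval (N+1, N+2). -/
import Mathlib


/-- x³ − (N+1)x² − Nx − (N+1) has exactly one root in (N+1, N+2). -/
theorem unique_root_golden_3N1 (N : ℕ) :
    ∃! x : ℝ, x ∈ Set.Ioo ((N : ℝ) + 1) ((N : ℝ) + 2) ∧
      x ^ 3 - ((N : ℝ) + 1) * x ^ 2 - (N : ℝ) * x - ((N : ℝ) + 1) = 0 := by
  have hN : (0:ℝ) ≤ N := Nat.cast_nonneg N
  set f : ℝ → ℝ := fun x => x ^ 3 - ((N : ℝ) + 1) * x ^ 2 - (N : ℝ) * x - ((N : ℝ) + 1)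
    with hf
  have hc : ContinuousOn f (Set.Icc ((N:ℝ)+1) ((N:ℝ)+2)) := by
    apply Continuous.continuousOn; fun_prop
  have h1 : f ((N:ℝ)+1) < 0 := by simp only [hf]; nlinarith
  have h2 : 0 < f ((N:ℝ)+2) := by simp only [hf]; nlinarith
  have hmem : (0:ℝ) ∈ Set.Ioo (f ((N:ℝ)+1)) (f ((N:ℝ)+2)) := ⟨h1, h2⟩
  obtain ⟨x, hx, hfx⟩ := intermediate_value_Ioo (by linarith : (N:ℝ)+1 ≤ (N:ℝ)+2) hc hmem
  refine ⟨x, ⟨hx, hfx⟩, ?_⟩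
  rintro y ⟨hy, hfy⟩
  obtain ⟨hx1, hx2⟩ := hx
  obtain ⟨hy1, hy2⟩ := hy
  simp only [hf] at hfx hfy
  have key : ∀ a b : ℝ, (N:ℝ)+1 < a → (N:ℝ)+1 < b → a < b →
      a ^ 3 - ((N : ℝ) + 1) * a ^ 2 - (N : ℝ) * a - ((N : ℝ) + 1) = 0 →
      b ^ 3 - ((N : ℝ) + 1) * b ^ 2 - (N : ℝ) * b - ((N : ℝ) + 1) = 0 → False := by
    intro a b ha hb hab ha0 hb0
    have hap : 0 < a := by linarith
    have hbp : 0 < b := by linarith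
    have hQ : 0 < a^2 + a*b + b^2 - ((N:ℝ)+1)*(a+b) - N := by
      nlinarith [mul_pos hap (sub_pos.mpr ha), mul_pos hbp (sub_pos.mpr hb),
        mul_pos (sub_pos.mpr ha) (sub_pos.mpr hb)]
    nlinarith [mul_pos (sub_pos.mpr hab) hQ]
  rcases lt_trichotomy y x with h | h | h
  · exact absurd (key y x hy1 hx1 h hfy hfx) (fun t => t)
  · exact h
  · exact absurd (key x y hx1 hy1 h hfx hfy) (fun t => t)
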